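/- Let (c_k)_{k≥1} be any sequence of positive integers and q_{-1} = 0, q_0 = 1, q_k = c_k·q_{k−1} + q_{k−2}. Then for every integer ℓ there exist k₀ ∈ ℕ₀ and a sequence of integers (μ_j)_{j≥−1} such that μ_j = 0 for all j > k₀ and ℓ = Σ_{j=−1}^{k₀} (−1)^j·μ_j·q_j, where the sequence satisfies all of: μ_{−1} ∈ {0,1}; μ_{−1} = 1 if and only if μ_0 = −1; −1 ≤ μ_0 ≤ c_1 − 1; if μ_0 = c_1 − 1 then μ_1 = 0; for every j ≥ 1, 0 ≤ μ_j ≤ c_{j+1} and if μ_j = c_{j+1} then μ_{j+1} = 0. Moreover, if ℓ ∉ {−1, 0, 1}, then μ_{k₀} ≥ 1. -/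

import Mathlib

/-- Denominators of the convergents of a continued fraction with digits
`c 1, c 2, …`, with shifted index: `qConv c 0 = q₋₁ = 0`, `qConv c (k+1) = q_k`. -/
def qConv (c : ℕ → ℕ) : ℕ → ℤ
  | 0 => 0
  | 1 => 1
  | (k + 2) => (c (k + 1) : ℤ) * qConv c (k + 1) + qConv c k

namespace OstAux

variable {c : ℕ → ℕ}

lemma q_rec (c : ℕ → ℕ) (t : ℕ) :
    qConv c (t + 2) = (c (t + 1) : ℤ) * qConv c (t + 1) + qConv c t := rfl

lemma q_zero (c : ℕ → ℕ) : qConv c 0 = 0 := rfl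
lemma q_one (c : ℕ → ℕ) : qConv c 1 = 1 := rfl

lemma cast_pos (hc : ∀ k, 1 ≤ k → 1 ≤ c k) {k : ℕ} (hk : 1 ≤ k) : (1 : ℤ) ≤ (c k : ℤ) := by
  exact_mod_cast hc k hk

lemma q_nonneg (hc : ∀ k, 1 ≤ k → 1 ≤ c k) : ∀ t, 0 ≤ qConv c t := by
  intro t
  induction t using Nat.strong_induction_on with
  | _ t ih =>
    match t with
    | 0 => simp [q_zero]
    | 1 => simp [q_one]
    | (s + 2) =>
      rw [q_rec]
      have h1 := ih (s + 1) (by omega)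
      have h2 := ih s (by omega)
      have h3 := cast_pos hc (k := s + 1) (by omega)
      nlinarith

lemma q_pos (hc : ∀ k, 1 ≤ k → 1 ≤ c k) : ∀ t, 1 ≤ t → 1 ≤ qConv c t := by
  intro t
  induction t using Nat.strong_induction_on with
  | _ t ih =>
    match t with
    | 0 => omega
    | 1 => intro _; simp [q_one]
    | (s + 2) =>
      intro _
      rw [q_rec]
      have h1 := ih (s + 1) (by omega) (by omega)
      have h2 := q_nonneg hc s
      have h3 := cast_pos hc (k := s + 1) (by omega)
      nlinarith

lemma q_mono (hc : ∀ k, 1 ≤ k → 1 ≤ c k) : ∀ t, 1 ≤ t → qConv c t ≤ qConv c (t + 1) := by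
  intro t ht
  match t, ht with
  | 1, _ => simpa [q_one, q_rec, q_zero] using cast_pos hc (k := 1) le_rfl
  | (s + 2), _ =>
    rw [q_rec (c := c) (t := s + 1)]  -- qConv c (s+3)
    have h1 := q_pos hc (s + 2) (by omega)
    have h2 := q_nonneg hc (s + 1)
    have h3 := cast_pos hc (k := s + 2) (by omega)
    nlinarith

lemma q_unbounded (hc : ∀ k, 1 ≤ k → 1 ≤ c k) : ∀ n : ℕ, (n : ℤ) ≤ qConv c (n + 1) := by
  intro n
  induction n using Nat.strong_induction_on with
  | _ n ih =>
    match n with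
    | 0 => simp [q_one]
    | 1 => simpa [q_rec, q_one, q_zero] using cast_pos hc (k := 1) le_rfl
    | (s + 2) =>
      have h1 := ih (s + 1) (by omega)
      have h2 := ih s (by omega)
      have h3 := cast_pos hc (k := s + 2) (by omega)
      have h4 := q_pos hc (s + 2) (by omega)
      have h5 := q_pos hc (s + 1) (by omega)
      rw [q_rec]
      push_cast
      push_cast at h1 h2
      nlinarith


/-- Admissibility of a coefficient sequence (ignoring index 0). -/
def Adm (c : ℕ → ℕ) (μ : ℕ → ℤ) : Prop :=
  (-1 ≤ μ 1 ∧ μ 1 ≤ (c 1 : ℤ) - 1) ∧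
  (μ 1 = (c 1 : ℤ) - 1 → μ 2 = 0) ∧
  (∀ n, 2 ≤ n → 0 ≤ μ n ∧ μ n ≤ (c n : ℤ) ∧ (μ n = (c n : ℤ) → μ (n + 1) = 0))

/-- Effective top bound for the coefficient at index `t`. -/
def cTop (c : ℕ → ℕ) (t : ℕ) : ℤ := if t = 1 then (c 1 : ℤ) - 1 else (c t : ℤ)

def S (c : ℕ → ℕ) (μ : ℕ → ℤ) (t : ℕ) : ℤ :=
  ∑ n ∈ Finset.range (t + 1), (-1) ^ (n + 1) * μ n * qConv c n

def Rep (c : ℕ → ℕ) (ℓ : ℤ) (t : ℕ) (μ : ℕ → ℤ) : Prop :=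
  Adm c μ ∧ μ 0 = 0 ∧ (∀ n, t < n → μ n = 0) ∧ ℓ = S c μ t

lemma S_restrict (μ : ℕ → ℤ) {t' t : ℕ} (h : t' ≤ t) (hv : ∀ n, t' < n → μ n = 0) :
    S c μ t = S c μ t' := by
  unfold S
  refine (Finset.sum_subset (Finset.range_subset_range.mpr (by omega : t' + 1 ≤ t + 1)) ?_).symm
  intro x _ hx
  simp only [Finset.mem_range] at hx
  rw [hv x (by omega)]
  ring

lemma rep_mono (hc : ∀ k, 1 ≤ k → 1 ≤ c k) {ℓ : ℤ} {t t' : ℕ} {μ : ℕ → ℤ}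
    (h : Rep c ℓ t μ) (htt : t ≤ t') : Rep c ℓ t' μ := by
  obtain ⟨h1, h2, h3, h4⟩ := h
  exact ⟨h1, h2, fun n hn => h3 n (by omega), by rw [S_restrict μ htt h3]; exact h4⟩

lemma adm_zero (hc : ∀ k, 1 ≤ k → 1 ≤ c k) : Adm c (fun _ => 0) := by
  refine ⟨⟨by norm_num, ?_⟩, fun _ => rfl, fun n hn => ⟨le_rfl, by positivity, fun _ => rfl⟩⟩
  show (0 : ℤ) ≤ (c 1 : ℤ) - 1
  have := cast_pos hc (k := 1) le_rfl; linarith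

lemma rep_zero (hc : ∀ k, 1 ≤ k → 1 ≤ c k) (t : ℕ) : Rep c 0 t (fun _ => 0) := by
  refine ⟨adm_zero hc, rfl, fun _ _ => rfl, ?_⟩
  unfold S
  simp

/-- representation supported at index 1 only -/
lemma rep_single (hc : ∀ k, 1 ≤ k → 1 ≤ c k) {v : ℤ} (h1 : -1 ≤ v) (h2 : v ≤ (c 1 : ℤ) - 1) :
    Rep c v 1 (fun n => if n = 1 then v else 0) := by
  refine ⟨⟨⟨by simpa using h1, by simpa using h2⟩, ?_, ?_⟩, rfl, ?_, ?_⟩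
  · intro _; simp
  · intro n hn
    refine ⟨?_, ?_, ?_⟩
    · simp [show n ≠ 1 by omega]
    · simp only [show n ≠ 1 by omega, if_false]
      exact le_trans (by norm_num) (cast_pos hc (by omega : 1 ≤ n))
    · intro _; simp [show n + 1 ≠ 1 by omega, show n ≠ 0 by omega]
  · intro n hn; simp [show n ≠ 1 by omega]
  · unfold S
    rw [Finset.sum_range_succ, Finset.sum_range_one]
    simp [q_one, q_zero]


lemma cTop_le (t : ℕ) : cTop c t ≤ (c t : ℤ) := by
  unfold cTop
  split
  · next h => subst h; omega
  · exact le_rfl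

lemma cTop_pos (hc : ∀ k, 1 ≤ k → 1 ≤ c k) {t : ℕ} (ht : 2 ≤ t) : 0 < cTop c t := by
  unfold cTop
  rw [if_neg (by omega)]
  exact lt_of_lt_of_le zero_lt_one (cast_pos hc (by omega))

lemma rep_stack (hc : ∀ k, 1 ≤ k → 1 ≤ c k) {r a : ℤ} {s : ℕ} (hs : 1 ≤ s) {μ : ℕ → ℤ}
    (hrep : Rep c r s μ) (htop : μ s < cTop c s)
    (ha1 : 1 ≤ a) (ha2 : a ≤ (c (s + 1) : ℤ)) :
    Rep c (r + (-1) ^ (s + 2) * a * qConv c (s + 1)) (s + 1)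
      (fun n => if n = s + 1 then a else μ n) := by
  obtain ⟨⟨⟨ha11, ha12⟩, ha2', ha3⟩, h0, hsupp, hsum⟩ := hrep
  refine ⟨⟨⟨?_, ?_⟩, ?_, ?_⟩, ?_, ?_, ?_⟩
  · simpa [show 1 ≠ s + 1 by omega, show s ≠ 0 by omega] using ha11
  · simpa [show 1 ≠ s + 1 by omega, show s ≠ 0 by omega] using ha12
  · -- μ' 1 = c 1 - 1 → μ' 2 = 0
    simp only [show 1 ≠ s + 1 by omega, if_false]
    intro h1
    by_cases h2 : 2 = s + 1
    · -- s = 1, μ' 2 = a, contradiction from htop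
      exfalso
      have : cTop c s = (c 1 : ℤ) - 1 := by
        unfold cTop; rw [if_pos (by omega)]
      rw [this] at htop
      have : μ 1 = μ s := by congr 1; omega
      omega
    · simp only [h2, if_false]
      exact ha2' h1
  · -- main constraint for n ≥ 2
    intro n hn
    by_cases hn1 : n = s + 1
    · subst hn1
      refine ⟨by simp; omega, by simp; omega, ?_⟩
      intro _
      simp only [show s + 1 + 1 ≠ s + 1 by omega, if_false]
      exact hsupp (s + 1 + 1) (by omega)
    · by_cases hn2 : n = s
      · subst hn2
        have hcs : cTop c n = (c n : ℤ) := by unfold cTop; rw [if_neg (by omega)]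
        refine ⟨by simpa [hn1] using (ha3 n hn).1, by simpa [hn1] using (ha3 n hn).2.1, ?_⟩
        simp only [hn1, if_false]
        intro h
        exfalso
        rw [hcs] at htop
        omega
      · refine ⟨by simpa [hn1] using (ha3 n hn).1, by simpa [hn1] using (ha3 n hn).2.1, ?_⟩
        simp only [hn1, if_false, show n + 1 ≠ s + 1 by omega]
        exact (ha3 n hn).2.2
  · simpa [show 0 ≠ s + 1 by omega] using h0
  · intro n hn
    by_cases h : n = s + 1
    · omega
    · simp only [h, if_false]
      exact hsupp n (by omega)
  · unfold S
    rw [Finset.sum_range_succ]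
    have h1 : ∑ n ∈ Finset.range (s + 1),
        (-1) ^ (n + 1) * (if n = s + 1 then a else μ n) * qConv c n
        = ∑ n ∈ Finset.range (s + 1), (-1) ^ (n + 1) * μ n * qConv c n := by
      apply Finset.sum_congr rfl
      intro x hx
      simp only [Finset.mem_range] at hx
      rw [if_neg (by omega)]
    have h2 : (fun n => if n = s + 1 then a else μ n) (s + 1) = a := by simp
    rw [h1, h2, hsum]
    unfold S
    ring


lemma div_bounds {x Q : ℤ} (hx : 0 ≤ x) (hQ : 0 < Q) :
    1 ≤ x / Q + 1 ∧ (x / Q) * Q ≤ x ∧ x < (x / Q + 1) * Q := by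
  have h1 := Int.mul_ediv_add_emod x Q
  have h2 := Int.emod_nonneg x (ne_of_gt hQ)
  have h3 := Int.emod_lt_of_pos x hQ
  have h4 := Int.ediv_nonneg hx (le_of_lt hQ)
  refine ⟨by omega, ?_, ?_⟩ <;> nlinarith

lemma mul_lt_cancel {a b Q : ℤ} (hQ : 0 < Q) (h : a * Q < b * Q) : a < b :=
  lt_of_mul_lt_mul_right h (le_of_lt hQ)

set_option maxHeartbeats 2000000 in
lemma main_induction (hc : ∀ k, 1 ≤ k → 1 ≤ c k) : ∀ t : ℕ,
    (∀ ℓ : ℤ, Odd t → 1 ≤ ℓ → ℓ ≤ qConv c (t + 1) - 1 →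
      ∃ μ, Rep c ℓ t μ ∧
        (ℓ ≤ qConv c (t + 1) - qConv c t - 1 → μ t < cTop c t) ∧
        (∃ t', 1 ≤ t' ∧ t' ≤ t ∧ 1 ≤ μ t' ∧ ∀ n, t' < n → μ n = 0)) ∧
    (∀ ℓ : ℤ, Even t → 2 ≤ t → -qConv c (t + 1) ≤ ℓ → ℓ ≤ -1 →
      ∃ μ, Rep c ℓ t μ ∧
        (-qConv c (t + 1) + qConv c t ≤ ℓ → μ t < cTop c t) ∧
        (ℓ = -1 ∨ ∃ t', 1 ≤ t' ∧ t' ≤ t ∧ 1 ≤ μ t' ∧ ∀ n, t' < n → μ n = 0)) := by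
  intro t
  induction t using Nat.strong_induction_on with
  | _ t ih =>
    match t, ih with
    | 0, ih =>
      constructor
      · intro ℓ hodd; exact absurd hodd (by decide)
      · intro ℓ _ h2; omega
    | 1, ih =>
      constructor
      · intro ℓ _ h1 h2
        have hq2 : qConv c 2 = (c 1 : ℤ) := by
          rw [q_rec]; simp [q_one, q_zero]
        have hq1 : qConv c 1 = 1 := q_one c
        refine ⟨fun n => if n = 1 then ℓ else 0,
          rep_single hc (by linarith) (by rw [hq2] at h2; linarith), ?_, ?_⟩
        · intro h
          have hct : cTop c 1 = (c 1 : ℤ) - 1 := by unfold cTop; rw [if_pos rfl]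
          show ℓ < cTop c 1
          rw [hct]
          rw [hq2, hq1] at h; linarith
        · exact ⟨1, le_rfl, le_rfl, by simpa using h1, fun n hn => by simp [show n ≠ 1 by omega]⟩
      · intro ℓ heven; exact absurd heven (by decide)
    | 2, ih =>
      constructor
      · intro ℓ hodd; exact absurd hodd (by decide)
      · intro ℓ _ _ h3 h4
        have hq2 : qConv c 2 = (c 1 : ℤ) := by rw [q_rec]; simp [q_one, q_zero]
        have hq3 : qConv c 3 = (c 2 : ℤ) * qConv c 2 + 1 := by rw [q_rec]; rw [q_one]
        have hQ2pos : (0 : ℤ) < qConv c 2 := by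
          have := q_pos hc 2 (by omega); linarith
        by_cases hm1 : ℓ = -1
        · subst hm1
          refine ⟨fun n => if n = 1 then -1 else 0,
            rep_mono hc (rep_single hc le_rfl (by have := cast_pos hc (k := 1) le_rfl; linarith))
              (by omega), ?_, Or.inl rfl⟩
          intro _
          have h0 : (fun n => if n = 1 then (-1 : ℤ) else 0) 2 = 0 := by norm_num
          rw [h0]
          exact cTop_pos hc le_rfl
        · -- ℓ ≤ -2
          set x : ℤ := -ℓ - 2 with hxdef
          have hx0 : 0 ≤ x := by omega
          set Q2 := qConv c 2 with hQ2def
          obtain ⟨ha1, hd1, hd2⟩ := div_bounds hx0 hQ2pos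
          set a : ℤ := x / Q2 + 1 with hadef
          set r : ℤ := ℓ + a * Q2 with hrdef
          have hr1 : -1 ≤ r := by nlinarith
          have hr2 : r ≤ Q2 - 2 := by nlinarith
          have hac : a ≤ (c 2 : ℤ) := by
            have hxle : x ≤ (c 2 : ℤ) * Q2 - 1 := by rw [hq3] at h3; omega
            have : (a - 1) * Q2 < (c 2 : ℤ) * Q2 := by nlinarith
            have := mul_lt_cancel hQ2pos this
            omega
          have hsingle := rep_single hc (v := r) hr1 (by rw [hq2] at hr2; omega)
          have htop : (fun n => if n = 1 then r else 0) 1 < cTop c 1 := by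
            have hct : cTop c 1 = (c 1 : ℤ) - 1 := by unfold cTop; rw [if_pos rfl]
            show r < cTop c 1
            rw [hct]; rw [hq2] at hr2; omega
          have hstack := rep_stack hc (s := 1) le_rfl hsingle htop ha1 hac
          have hV : r + (-1 : ℤ) ^ (1 + 2) * a * qConv c (1 + 1) = ℓ := by
            have : ((-1 : ℤ)) ^ (1 + 2) = -1 := by norm_num
            rw [this]
            simp only [hrdef, ← hQ2def]
            ring
          rw [hV] at hstack
          refine ⟨_, hstack, ?_, Or.inr ⟨2, by omega, le_rfl, by simpa using ha1,
            hstack.2.2.1⟩⟩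
          · intro h
            have hct : cTop c 2 = (c 2 : ℤ) := by unfold cTop; rw [if_neg (by omega)]
            show a < cTop c 2
            rw [hct]
            -- ℓ ≥ -Q3 + Q2 → a < c 2
            have hxle : x ≤ (c 2 : ℤ) * Q2 - Q2 - 1 := by rw [hq3] at h; omega
            have : (a - 1) * Q2 < ((c 2 : ℤ) - 1) * Q2 := by nlinarith
            have := mul_lt_cancel hQ2pos this
            omega
    | (s + 3), ih =>
      have hQ2pos : (0 : ℤ) < qConv c (s + 2) := by
        have := q_pos hc (s + 2) (by omega); linarith
      have hQ3pos : (0 : ℤ) < qConv c (s + 3) := by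
        have := q_pos hc (s + 3) (by omega); linarith
      have hq4 : qConv c (s + 4) = (c (s + 3) : ℤ) * qConv c (s + 3) + qConv c (s + 2) :=
        q_rec c (s + 2)
      have hctop3 : cTop c (s + 3) = (c (s + 3) : ℤ) := by unfold cTop; rw [if_neg (by omega)]
      constructor
      · -- positive side, s + 3 odd
        intro ℓ hodd h1 h2
        have h2' : ℓ ≤ qConv c (s + 4) - 1 := h2
        by_cases hsmall : ℓ ≤ qConv c (s + 2) - 1
        · -- use P (s + 1)
          have hodd1 : Odd (s + 1) := by rcases hodd with ⟨k, hk⟩; exact ⟨k - 1, by omega⟩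
          obtain ⟨μ, hrep, _, t', ht1, ht2, ht3, ht4⟩ :=
            (ih (s + 1) (by omega)).1 ℓ hodd1 h1 hsmall
          refine ⟨μ, rep_mono hc hrep (by omega), ?_, t', ht1, by omega, ht3, ht4⟩
          intro _
          rw [hrep.2.2.1 (s + 3) (by omega)]
          exact cTop_pos hc (by omega)
        · -- big branch : qConv c (s+2) ≤ ℓ
          set x : ℤ := ℓ - qConv c (s + 2) with hxdef
          have hx0 : 0 ≤ x := by omega
          obtain ⟨ha1, hd1, hd2⟩ := div_bounds hx0 hQ3pos
          set a : ℤ := x / qConv c (s + 3) + 1 with hadef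
          set r : ℤ := ℓ - a * qConv c (s + 3) with hrdef
          have hr1 : r ≤ qConv c (s + 2) - 1 := by omega
          have hr2 : qConv c (s + 2) - qConv c (s + 3) ≤ r := by nlinarith
          have hac : a ≤ (c (s + 3) : ℤ) := by
            have hxle : x ≤ (c (s + 3) : ℤ) * qConv c (s + 3) - 1 := by
              rw [hq4] at h2'; omega
            have : (a - 1) * qConv c (s + 3) < (c (s + 3) : ℤ) * qConv c (s + 3) := by nlinarith
            have := mul_lt_cancel hQ3pos this
            omega
          -- remainder representation at level s + 2 with restricted top
          have hrem : ∃ μr, Rep c r (s + 2) μr ∧ μr (s + 2) < cTop c (s + 2) := by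
            rcases lt_trichotomy r 0 with hneg | hzero | hpos
            · have heven2 : Even (s + 2) := by rcases hodd with ⟨k, hk⟩; exact ⟨k, by omega⟩
              obtain ⟨μr, hrepr, hstr, _⟩ :=
                (ih (s + 2) (by omega)).2 r heven2 (by omega)
                  (by show -qConv c (s + 3) ≤ r; omega) (by omega)
              exact ⟨μr, hrepr, hstr (by show -qConv c (s + 3) + qConv c (s + 2) ≤ r; omega)⟩
            · exact ⟨fun _ => 0, hzero ▸ rep_zero hc (s + 2), cTop_pos hc (by omega)⟩
            · have hodd1 : Odd (s + 1) := by rcases hodd with ⟨k, hk⟩; exact ⟨k - 1, by omega⟩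
              obtain ⟨μr, hrepr, _, _⟩ :=
                (ih (s + 1) (by omega)).1 r hodd1 (by omega)
                  (by show r ≤ qConv c (s + 2) - 1; omega)
              refine ⟨μr, rep_mono hc hrepr (by omega), ?_⟩
              rw [hrepr.2.2.1 (s + 2) (by omega)]
              exact cTop_pos hc (by omega)
          obtain ⟨μr, hrepr, htopr⟩ := hrem
          have hstack := rep_stack hc (s := s + 2) (by omega) hrepr htopr ha1 hac
          have heven4 : Even (s + 2 + 2) := by rcases hodd with ⟨k, hk⟩; exact ⟨k + 1, by omega⟩
          have hV : r + (-1 : ℤ) ^ (s + 2 + 2) * a * qConv c (s + 2 + 1) = ℓ := by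
            rw [heven4.neg_one_pow]
            show r + 1 * a * qConv c (s + 3) = ℓ
            rw [one_mul]
            omega
          rw [hV] at hstack
          have ea : (if s + 3 = s + 2 + 1 then a else μr (s + 3)) = a := if_pos rfl
          refine ⟨_, hstack, ?_, s + 3, by omega, le_rfl, ?_, hstack.2.2.1⟩
          · intro h
            show (if s + 3 = s + 2 + 1 then a else μr (s + 3)) < cTop c (s + 3)
            rw [ea, hctop3]
            have hxle : x ≤ ((c (s + 3) : ℤ) - 1) * qConv c (s + 3) - 1 := by
              rw [hq4] at h; nlinarith
            have : (a - 1) * qConv c (s + 3) < ((c (s + 3) : ℤ) - 1) * qConv c (s + 3) := by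
              nlinarith
            have := mul_lt_cancel hQ3pos this
            omega
          · show (1 : ℤ) ≤ if s + 3 = s + 2 + 1 then a else μr (s + 3)
            rw [ea]
            exact ha1
      · -- negative side, s + 3 even
        intro ℓ heven _ h3 h4
        have h3' : -qConv c (s + 4) ≤ ℓ := h3
        have hs1 : 1 ≤ s := by rcases heven with ⟨k, hk⟩; omega
        by_cases hsmall : -qConv c (s + 2) ≤ ℓ
        · have heven1 : Even (s + 1) := by rcases heven with ⟨k, hk⟩; exact ⟨k - 1, by omega⟩
          obtain ⟨μ, hrep, _, htopor⟩ :=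
            (ih (s + 1) (by omega)).2 ℓ heven1 (by omega) hsmall h4
          refine ⟨μ, rep_mono hc hrep (by omega), ?_, ?_⟩
          · intro _
            rw [hrep.2.2.1 (s + 3) (by omega)]
            exact cTop_pos hc (by omega)
          · rcases htopor with h | ⟨t', a1, a2, a3, a4⟩
            · exact Or.inl h
            · exact Or.inr ⟨t', a1, by omega, a3, a4⟩
        · -- big branch : ℓ ≤ -qConv c (s+2) - 1
          set x : ℤ := -ℓ - qConv c (s + 2) - 1 with hxdef
          have hx0 : 0 ≤ x := by omega
          obtain ⟨ha1, hd1, hd2⟩ := div_bounds hx0 hQ3pos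
          set a : ℤ := x / qConv c (s + 3) + 1 with hadef
          set r : ℤ := ℓ + a * qConv c (s + 3) with hrdef
          have hr1 : -qConv c (s + 2) ≤ r := by omega
          have hr2 : r ≤ qConv c (s + 3) - qConv c (s + 2) - 1 := by nlinarith
          have hac : a ≤ (c (s + 3) : ℤ) := by
            have hxle : x ≤ (c (s + 3) : ℤ) * qConv c (s + 3) - 1 := by
              rw [hq4] at h3'; omega
            have : (a - 1) * qConv c (s + 3) < (c (s + 3) : ℤ) * qConv c (s + 3) := by nlinarith
            have := mul_lt_cancel hQ3pos this
            omega
          have hrem : ∃ μr, Rep c r (s + 2) μr ∧ μr (s + 2) < cTop c (s + 2) := by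
            rcases lt_trichotomy r 0 with hneg | hzero | hpos
            · have heven1 : Even (s + 1) := by rcases heven with ⟨k, hk⟩; exact ⟨k - 1, by omega⟩
              obtain ⟨μr, hrepr, _, _⟩ :=
                (ih (s + 1) (by omega)).2 r heven1 (by omega)
                  (by show -qConv c (s + 2) ≤ r; omega) (by omega)
              refine ⟨μr, rep_mono hc hrepr (by omega), ?_⟩
              rw [hrepr.2.2.1 (s + 2) (by omega)]
              exact cTop_pos hc (by omega)
            · exact ⟨fun _ => 0, hzero ▸ rep_zero hc (s + 2), cTop_pos hc (by omega)⟩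
            · have hodd2 : Odd (s + 2) := by rcases heven with ⟨k, hk⟩; exact ⟨k - 1, by omega⟩
              obtain ⟨μr, hrepr, hstr, _⟩ :=
                (ih (s + 2) (by omega)).1 r hodd2 (by omega)
                  (by show r ≤ qConv c (s + 3) - 1; omega)
              exact ⟨μr, hrepr,
                hstr (by show r ≤ qConv c (s + 3) - qConv c (s + 2) - 1; omega)⟩
          obtain ⟨μr, hrepr, htopr⟩ := hrem
          have hstack := rep_stack hc (s := s + 2) (by omega) hrepr htopr ha1 hac
          have hodd4 : Odd (s + 2 + 2) := by rcases heven with ⟨k, hk⟩; exact ⟨k, by omega⟩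
          have hsign : ((-1 : ℤ)) ^ (s + 2 + 2) = -1 := hodd4.neg_one_pow
          have hV : r + (-1 : ℤ) ^ (s + 2 + 2) * a * qConv c (s + 2 + 1) = ℓ := by
            rw [hsign]
            show r + -1 * a * qConv c (s + 3) = ℓ
            rw [neg_one_mul, neg_mul]
            omega
          rw [hV] at hstack
          have ea : (if s + 3 = s + 2 + 1 then a else μr (s + 3)) = a := if_pos rfl
          refine ⟨_, hstack, ?_, Or.inr ⟨s + 3, by omega, le_rfl, ?_, hstack.2.2.1⟩⟩
          · intro h
            show (if s + 3 = s + 2 + 1 then a else μr (s + 3)) < cTop c (s + 3)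
            rw [ea, hctop3]
            have hxle : x ≤ ((c (s + 3) : ℤ) - 1) * qConv c (s + 3) - 1 := by
              rw [hq4] at h; nlinarith
            have h5 : (a - 1) * qConv c (s + 3) < ((c (s + 3) : ℤ) - 1) * qConv c (s + 3) := by
              nlinarith
            have := mul_lt_cancel hQ3pos h5
            omega
          · show (1 : ℤ) ≤ if s + 3 = s + 2 + 1 then a else μr (s + 3)
            rw [ea]
            exact ha1


lemma assemble (hc : ∀ k, 1 ≤ k → 1 ≤ c k) {ℓ : ℤ} {t t' : ℕ} {μ : ℕ → ℤ}
    (hrep : Rep c ℓ t μ) (ht1 : 1 ≤ t') (ht2 : t' ≤ t)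
    (ht3 : 1 ≤ μ t') (hsupp' : ∀ n, t' < n → μ n = 0) :
    ∃ (k₀ : ℕ) (ν : ℕ → ℤ),
      (∀ n, k₀ + 1 < n → ν n = 0) ∧
      ℓ = ∑ n ∈ Finset.range (k₀ + 2), (-1) ^ (n + 1) * ν n * qConv c n ∧
      (ν 0 = 0 ∨ ν 0 = 1) ∧
      (ν 0 = 1 ↔ ν 1 = -1) ∧
      (-1 ≤ ν 1 ∧ ν 1 ≤ (c 1 : ℤ) - 1) ∧
      (ν 1 = (c 1 : ℤ) - 1 → ν 2 = 0) ∧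
      (∀ n, 2 ≤ n → 0 ≤ ν n ∧ ν n ≤ (c n : ℤ) ∧ (ν n = (c n : ℤ) → ν (n + 1) = 0)) ∧
      (1 ≤ ν (k₀ + 1)) := by
  classical
  obtain ⟨k, rfl⟩ : ∃ k, t' = k + 1 := ⟨t' - 1, by omega⟩
  obtain ⟨⟨⟨ha1, ha2⟩, hb, hcc⟩, h0, hsupp, hsum⟩ := hrep
  refine ⟨k, fun n => if n = 0 then (if μ 1 = -1 then 1 else 0) else μ n,
    ?_, ?_, ?_, ?_, ⟨?_, ?_⟩, ?_, ?_, ?_⟩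
  · intro n hn
    simp only [show n ≠ 0 by omega, if_false]
    exact hsupp' n (by omega)
  · have e1 : S c μ t = S c μ (k + 1) := S_restrict μ (by omega) hsupp'
    rw [hsum, e1]
    unfold S
    apply Finset.sum_congr rfl
    intro n hn
    by_cases h : n = 0
    · subst h; rw [q_zero]; ring
    · simp only [h, if_false]
  · by_cases h : μ 1 = -1 <;> simp [h]
  · by_cases h : μ 1 = -1 <;> simp [h]
  · simpa using ha1
  · simpa using ha2
  · intro h
    simp only [show (1 : ℕ) ≠ 0 by omega, if_false] at h
    simp only [show (2 : ℕ) ≠ 0 by omega, if_false]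
    exact hb h
  · intro n hn
    simp only [show n ≠ 0 by omega, show n + 1 ≠ 0 by omega, if_false]
    exact hcc n hn
  · simpa using ht3

end OstAux


/-- Every integer `ℓ` can be written as a finite sum
`ℓ = Σ_{j=−1}^{k₀} (−1)^j μ_j q_j` with an admissible coefficient sequence
`(μ_j)_{j ≥ −1}` vanishing beyond `k₀`; moreover `μ_{k₀} ≥ 1` whenever
`ℓ ∉ {−1,0,1}`.  Here `μ n` stands for `μ_{n−1}` (index shift by one), so that
`μ 0 = μ₋₁` and `qConv c n = q_{n−1}`. -/
theorem integer_as_admissible_combination (c : ℕ → ℕ) (hc : ∀ k, 1 ≤ k → 1 ≤ c k)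
    (ℓ : ℤ) :
    ∃ (k₀ : ℕ) (μ : ℕ → ℤ),
      (∀ n, k₀ + 1 < n → μ n = 0) ∧
      ℓ = ∑ n ∈ Finset.range (k₀ + 2), (-1) ^ (n + 1) * μ n * qConv c n ∧
      (μ 0 = 0 ∨ μ 0 = 1) ∧
      (μ 0 = 1 ↔ μ 1 = -1) ∧
      (-1 ≤ μ 1 ∧ μ 1 ≤ (c 1 : ℤ) - 1) ∧
      (μ 1 = (c 1 : ℤ) - 1 → μ 2 = 0) ∧
      (∀ n, 2 ≤ n → 0 ≤ μ n ∧ μ n ≤ (c n : ℤ) ∧ (μ n = (c n : ℤ) → μ (n + 1) = 0)) ∧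
      ((ℓ ≠ -1 ∧ ℓ ≠ 0 ∧ ℓ ≠ 1) → 1 ≤ μ (k₀ + 1)) := by
  classical
  have hc1 : (1 : ℤ) ≤ (c 1 : ℤ) := OstAux.cast_pos hc le_rfl
  rcases lt_trichotomy ℓ 0 with hneg | hzero | hpos
  · by_cases hm1 : ℓ = -1
    · -- ℓ = -1
      subst hm1
      refine ⟨0, fun n => if n = 0 then 1 else if n = 1 then -1 else 0, ?_, ?_, Or.inr (by norm_num),
        by norm_num, ⟨by norm_num, by norm_num; linarith⟩, by norm_num, ?_, fun h => absurd rfl h.1⟩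
      · intro n hn
        simp [show n ≠ 0 by omega, show n ≠ 1 by omega]
      · rw [Finset.sum_range_succ, Finset.sum_range_one]
        rw [OstAux.q_zero, OstAux.q_one]
        norm_num
      · intro n hn
        refine ⟨?_, ?_, ?_⟩
        · simp [show n ≠ 0 by omega, show n ≠ 1 by omega]
        · simp only [show n ≠ 0 by omega, show n ≠ 1 by omega, if_false]
          exact le_trans (by norm_num) (OstAux.cast_pos hc (by omega : 1 ≤ n))
        · intro _
          simp [show n + 1 ≠ 0 by omega, show n + 1 ≠ 1 by omega, show n ≠ 0 by omega]
    · -- ℓ ≤ -2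
      set t : ℕ := 2 * (-ℓ).toNat with htdef
      have hcast : ((t : ℕ) : ℤ) = 2 * (-ℓ) := by
        rw [htdef]
        push_cast [Int.toNat_of_nonneg (by omega : (0 : ℤ) ≤ -ℓ)]
        ring
      have heven : Even t := ⟨(-ℓ).toNat, by omega⟩
      have hqb := OstAux.q_unbounded hc (c := c) t
      have hb1 : -qConv c (t + 1) ≤ ℓ := by rw [hcast] at hqb; omega
      obtain ⟨μ, hrep, _, htopor⟩ :=
        (OstAux.main_induction hc t).2 ℓ heven (by omega) hb1 (by omega)
      rcases htopor with h | ⟨t', ht1, ht2, ht3, ht4⟩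
      · exact absurd h hm1
      · obtain ⟨k₀, ν, b1, b2, b3, b4, b5, b6, b7, b8⟩ :=
          OstAux.assemble hc hrep ht1 ht2 ht3 ht4
        exact ⟨k₀, ν, b1, b2, b3, b4, b5, b6, b7, fun _ => b8⟩
  · -- ℓ = 0
    subst hzero
    refine ⟨0, fun _ => 0, fun _ _ => rfl, by simp, Or.inl rfl, by norm_num, ⟨by norm_num, ?_⟩,
      fun _ => rfl, fun n hn => ⟨le_rfl, ?_, fun _ => rfl⟩, fun h => absurd rfl h.2.1⟩
    · show (0 : ℤ) ≤ (c 1 : ℤ) - 1; linarith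
    · show (0 : ℤ) ≤ (c n : ℤ); positivity
  · -- ℓ ≥ 1
    set t : ℕ := 2 * ℓ.toNat + 1 with htdef
    have hcast : ((t : ℕ) : ℤ) = 2 * ℓ + 1 := by
      rw [htdef]
      push_cast [Int.toNat_of_nonneg (by omega : (0 : ℤ) ≤ ℓ)]
      ring
    have hodd : Odd t := ⟨ℓ.toNat, by omega⟩
    have hqb := OstAux.q_unbounded hc (c := c) t
    have hb1 : ℓ ≤ qConv c (t + 1) - 1 := by rw [hcast] at hqb; omega
    obtain ⟨μ, hrep, _, t', ht1, ht2, ht3, ht4⟩ :=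
      (OstAux.main_induction hc t).1 ℓ hodd (by omega) hb1
    obtain ⟨k₀, ν, b1, b2, b3, b4, b5, b6, b7, b8⟩ :=
      OstAux.assemble hc hrep ht1 ht2 ht3 ht4
    exact ⟨k₀, ν, b1, b2, b3, b4, b5, b6, b7, fun _ => b8⟩
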